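/- Let 𝒞 be a field on Ω. P is coherent in betting system 2A if and only if P is a countably additive probability on 𝒞. -/

import Mathlib

open Filter MeasureTheory ENNReal

variable {Ω : Type*}

noncomputable def ind (A : Set Ω) (ω : Ω) : ℝ := A.indicator (fun _ => (1:ℝ)) ω

def SeriesTendsTo (f : ℕ → ℝ) (x : ℝ) : Prop :=
  Tendsto (fun n => ∑ i ∈ Finset.range n, f i) atTop (nhds x)

def SeriesConv (f : ℕ → ℝ) : Prop := ∃ x, SeriesTendsTo f x

noncomputable def bterm (P : Set Ω → ℝ) (α : ℕ → ℝ) (A : ℕ → Set Ω) (ω : Ω) (i : ℕ) : ℝ :=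
  α i * (ind (A i) ω - P (A i))

def IsSetField (C : Set (Set Ω)) : Prop :=
  Set.univ ∈ C ∧ (∀ A ∈ C, Aᶜ ∈ C) ∧ ∀ A ∈ C, ∀ B ∈ C, A ∪ B ∈ C

def System1 (C : Set (Set Ω)) (α : ℕ → ℝ) (A : ℕ → Set Ω) : Prop :=
  (∀ i, A i ∈ C) ∧ {i | α i ≠ 0}.Finite

def System2 (C : Set (Set Ω)) (P : Set Ω → ℝ) (α : ℕ → ℝ) (A : ℕ → Set Ω) : Prop :=
  (∀ i, A i ∈ C) ∧ Summable (fun i => |α i| * P (A i)) ∧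
    ∀ ω, SeriesConv (bterm P α A ω)

def System2A (C : Set (Set Ω)) (P : Set Ω → ℝ) (α : ℕ → ℝ) (A : ℕ → Set Ω) : Prop :=
  (∀ i, A i ∈ C) ∧ ∀ ω, Summable (fun i => |bterm P α A ω i|)

def System2B (C : Set (Set Ω)) (P : Set Ω → ℝ) (α : ℕ → ℝ) (A : ℕ → Set Ω) : Prop :=
  (∀ i, A i ∈ C) ∧ ∃ M : ℝ, ∀ ω, ∀ n, ∑ i ∈ Finset.range n, |bterm P α A ω i| ≤ M

def System3 (C : Set (Set Ω)) (P : Set Ω → ℝ) (α : ℕ → ℝ) (A : ℕ → Set Ω) : Prop :=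
  (∀ i, A i ∈ C) ∧ SeriesConv (fun i => α i * P (A i)) ∧
    ∀ ω, SeriesConv (bterm P α A ω)

def IncoherentIn (P : Set Ω → ℝ) (S : (ℕ → ℝ) → (ℕ → Set Ω) → Prop) : Prop :=
  ∃ α A, S α A ∧ ∃ ε > (0:ℝ), ∀ ω, ∃ L, SeriesTendsTo (bterm P α A ω) L ∧ L ≤ -ε

def CoherentIn (P : Set Ω → ℝ) (S : (ℕ → ℝ) → (ℕ → Set Ω) → Prop) : Prop :=
  ¬ IncoherentIn P S

def IsNullSet (C : Set (Set Ω)) (P : Set Ω → ℝ) (Z : Set Ω) : Prop :=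
  ∀ δ : ℝ, 0 < δ → ∃ Zd ∈ C, Z ⊆ Zd ∧ P Zd < δ

def WeaklyIncoherentIn (C : Set (Set Ω)) (P : Set Ω → ℝ)
    (S : (ℕ → ℝ) → (ℕ → Set Ω) → Prop) : Prop :=
  ∃ α A, S α A ∧ ∃ ε > (0:ℝ), ∃ Z : Set Ω, IsNullSet C P Z ∧
    ∀ ω ∉ Z, ∃ L, SeriesTendsTo (bterm P α A ω) L ∧ L ≤ -ε

def StronglyCoherentIn (C : Set (Set Ω)) (P : Set Ω → ℝ)
    (S : (ℕ → ℝ) → (ℕ → Set Ω) → Prop) : Prop :=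
  ¬ WeaklyIncoherentIn C P S

def IrrationalIn (P : Set Ω → ℝ) (S : (ℕ → ℝ) → (ℕ → Set Ω) → Prop) : Prop :=
  ∃ α A, S α A ∧ ∀ ω, ∃ L, SeriesTendsTo (bterm P α A ω) L ∧ L < 0

def RationalIn (P : Set Ω → ℝ) (S : (ℕ → ℝ) → (ℕ → Set Ω) → Prop) : Prop :=
  ¬ IrrationalIn P S

def IsCAProb (C : Set (Set Ω)) (P : Set Ω → ℝ) : Prop :=
  P Set.univ = 1 ∧ (∀ A ∈ C, 0 ≤ P A) ∧
  (∀ A ∈ C, ∀ B ∈ C, Disjoint A B → P (A ∪ B) = P A + P B) ∧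
  (∀ A : ℕ → Set Ω, (∀ i, A i ∈ C) → Pairwise (Function.onFun Disjoint A) →
    (⋃ i, A i) ∈ C → HasSum (fun i => P (A i)) (P (⋃ i, A i)))

def IsPAtom (C : Set (Set Ω)) (P : Set Ω → ℝ) (F : Set Ω) : Prop :=
  F ∈ C ∧ 0 < P F ∧ ∀ B ∈ C, B ⊆ F → P B = P F ∨ P B = 0

def FiniteAtomicPartition (C : Set (Set Ω)) (P : Set Ω → ℝ) : Prop :=
  ∃ (n : ℕ) (F : Fin n → Set Ω), (∀ j, IsPAtom C P (F j)) ∧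
    Pairwise (Function.onFun Disjoint F) ∧ (⋃ j, F j) = Set.univ

def IsPFinite (C : Set (Set Ω)) (P : Set Ω → ℝ) : Prop :=
  ∀ B : ℕ → Set Ω, (∀ i, B i ∈ C) → (∀ i, B (i+1) ⊆ B i) →
    Tendsto (fun i => P (B i)) atTop (nhds 0) → ∃ j, P (B j) = 0


section AuxProof

variable {C : Set (Set Ω)} {P : Set Ω → ℝ}

lemma ind_of_mem {A : Set Ω} {ω : Ω} (h : ω ∈ A) : ind A ω = 1 := by
  simp [ind, Set.indicator_of_mem h]

lemma ind_of_not_mem {A : Set Ω} {ω : Ω} (h : ω ∉ A) : ind A ω = 0 := by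
  simp [ind, Set.indicator_of_notMem h]

lemma ind_nonneg (A : Set Ω) (ω : Ω) : 0 ≤ ind A ω := by
  by_cases h : ω ∈ A
  · rw [ind_of_mem h]; norm_num
  · rw [ind_of_not_mem h]

lemma ind_le_one (A : Set Ω) (ω : Ω) : ind A ω ≤ 1 := by
  by_cases h : ω ∈ A
  · rw [ind_of_mem h]
  · rw [ind_of_not_mem h]; norm_num

lemma ind_compl (A : Set Ω) (ω : Ω) : ind Aᶜ ω = 1 - ind A ω := by
  by_cases h : ω ∈ A
  · rw [ind_of_mem h, ind_of_not_mem (by simpa using h)]; ring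
  · rw [ind_of_not_mem h, ind_of_mem (by simpa using h)]; ring

namespace IsSetField

variable (hC : IsSetField C)
include hC

lemma univ_mem : Set.univ ∈ C := hC.1

lemma compl_mem {A : Set Ω} (hA : A ∈ C) : Aᶜ ∈ C := hC.2.1 A hA

lemma union_mem {A B : Set Ω} (hA : A ∈ C) (hB : B ∈ C) : A ∪ B ∈ C := hC.2.2 A hA B hB

lemma empty_mem : (∅ : Set Ω) ∈ C := by
  have := hC.compl_mem hC.univ_mem
  simpa using this

lemma inter_mem {A B : Set Ω} (hA : A ∈ C) (hB : B ∈ C) : A ∩ B ∈ C := by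
  have : A ∩ B = (Aᶜ ∪ Bᶜ)ᶜ := by rw [Set.compl_union, compl_compl, compl_compl]
  rw [this]
  exact hC.compl_mem (hC.union_mem (hC.compl_mem hA) (hC.compl_mem hB))

lemma biUnion_mem {ι : Type*} (s : Finset ι) (f : ι → Set Ω) (hf : ∀ i ∈ s, f i ∈ C) :
    (⋃ i ∈ s, f i) ∈ C := by
  classical
  induction s using Finset.induction_on with
  | empty => simpa using hC.empty_mem
  | @insert a s' hx ih =>
    rw [Finset.set_biUnion_insert]
    exact hC.union_mem (hf a (Finset.mem_insert_self a s'))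
      (ih fun i hi => hf i (Finset.mem_insert_of_mem hi))

lemma biInter_mem {ι : Type*} (s : Finset ι) (f : ι → Set Ω) (hf : ∀ i ∈ s, f i ∈ C) :
    (⋂ i ∈ s, f i) ∈ C := by
  classical
  induction s using Finset.induction_on with
  | empty => simpa using hC.univ_mem
  | @insert a s' hx ih =>
    rw [Finset.set_biInter_insert]
    exact hC.inter_mem (hf a (Finset.mem_insert_self a s'))
      (ih fun i hi => hf i (Finset.mem_insert_of_mem hi))

end IsSetField


section Pfacts
variable (hC : IsSetField C)
include hC
variable (h1 : P Set.univ = 1) (h2 : ∀ A ∈ C, 0 ≤ P A)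
  (h3 : ∀ A ∈ C, ∀ B ∈ C, Disjoint A B → P (A ∪ B) = P A + P B)
include h3

lemma P_empty : P (∅ : Set Ω) = 0 := by
  have h := h3 ∅ hC.empty_mem ∅ hC.empty_mem (by simp)
  simp at h
  linarith

include h1 in
lemma P_compl {A : Set Ω} (hA : A ∈ C) : P Aᶜ = 1 - P A := by
  have h := h3 A hA Aᶜ (hC.compl_mem hA) disjoint_compl_right
  rw [Set.union_compl_self] at h
  rw [h1] at h
  linarith

include h1 h2 in
lemma P_le_one {A : Set Ω} (hA : A ∈ C) : P A ≤ 1 := by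
  have h0 := h2 Aᶜ (hC.compl_mem hA)
  have := P_compl hC h1 h3 hA
  linarith

lemma P_union_diff {A B : Set Ω} (hA : A ∈ C) (hB : B ∈ C) (hAB : A ⊆ B) :
    P B = P A + P (B ∩ Aᶜ) := by
  have hmem : B ∩ Aᶜ ∈ C := hC.inter_mem hB (hC.compl_mem hA)
  have hdisj : Disjoint A (B ∩ Aᶜ) := by
    rw [Set.disjoint_left]; rintro x hx ⟨-, hx'⟩; exact hx' hx
  have hunion : A ∪ (B ∩ Aᶜ) = B := by
    ext x; constructor
    · rintro (h | ⟨h, -⟩); exacts [hAB h, h]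
    · intro h; by_cases hxA : x ∈ A
      · exact Or.inl hxA
      · exact Or.inr ⟨h, hxA⟩
  have h := h3 A hA _ hmem hdisj
  rw [hunion] at h
  linarith

include h2 in
lemma P_mono {A B : Set Ω} (hA : A ∈ C) (hB : B ∈ C) (hAB : A ⊆ B) : P A ≤ P B := by
  have h := P_union_diff hC h3 hA hB hAB
  have := h2 _ (hC.inter_mem hB (hC.compl_mem hA))
  linarith

lemma P_biUnion {ι : Type*} (s : Finset ι) (W : ι → Set Ω) (hW : ∀ i ∈ s, W i ∈ C)
    (hd : ∀ i ∈ s, ∀ j ∈ s, i ≠ j → Disjoint (W i) (W j)) :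
    P (⋃ i ∈ s, W i) = ∑ i ∈ s, P (W i) := by
  classical
  induction s using Finset.induction_on with
  | empty => simpa using P_empty hC h3
  | @insert a s' hx ih =>
    rw [Finset.set_biUnion_insert, Finset.sum_insert hx]
    have hWa : W a ∈ C := hW a (Finset.mem_insert_self a s')
    have hrest : (⋃ i ∈ s', W i) ∈ C :=
      hC.biUnion_mem s' W fun i hi => hW i (Finset.mem_insert_of_mem hi)
    have hdisj : Disjoint (W a) (⋃ i ∈ s', W i) := by
      rw [Set.disjoint_iUnion_right]
      intro i
      rw [Set.disjoint_iUnion_right]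
      intro hi
      exact hd a (Finset.mem_insert_self a s') i (Finset.mem_insert_of_mem hi)
        (by rintro rfl; exact hx hi)
    rw [h3 _ hWa _ hrest hdisj,
      ih (fun i hi => hW i (Finset.mem_insert_of_mem hi))
        (fun i hi j hj hij => hd i (Finset.mem_insert_of_mem hi) j
          (Finset.mem_insert_of_mem hj) hij)]


end Pfacts
/-! ### Atoms -/

def atomOf (U : ℕ → Set Ω) (s t : Finset ℕ) : Set Ω :=
  ⋂ i ∈ s, (if i ∈ t then U i else (U i)ᶜ)

lemma mem_atomOf {U : ℕ → Set Ω} {s t : Finset ℕ} {ω : Ω} :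
    ω ∈ atomOf U s t ↔ ∀ i ∈ s, (ω ∈ U i ↔ i ∈ t) := by
  simp only [atomOf, Set.mem_iInter]
  refine forall₂_congr fun i hi => ?_
  by_cases h : i ∈ t <;> simp [h]

lemma atomOf_mem (hC : IsSetField C) {U : ℕ → Set Ω} {s t : Finset ℕ}
    (hU : ∀ i ∈ s, U i ∈ C) : atomOf U s t ∈ C := by
  refine hC.biInter_mem s _ fun i hi => ?_
  by_cases h : i ∈ t <;> simp [h, hU i hi, hC.compl_mem (hU i hi)]

open Classical in
lemma mem_atomOf_filter {U : ℕ → Set Ω} (s : Finset ℕ) (ω : Ω) :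
    ω ∈ atomOf U s (s.filter (fun i => ω ∈ U i)) := by
  rw [mem_atomOf]
  intro i hi
  simp [Finset.mem_filter, hi]

lemma atomOf_eq_of_mem {U : ℕ → Set Ω} {s t t' : Finset ℕ} (ht : t ⊆ s) (ht' : t' ⊆ s)
    {ω : Ω} (h : ω ∈ atomOf U s t) (h' : ω ∈ atomOf U s t') : t = t' := by
  rw [mem_atomOf] at h h'
  ext i
  by_cases hi : i ∈ s
  · rw [← h i hi, ← h' i hi]
  · constructor <;> intro hit
    · exact absurd (ht hit) hi
    · exact absurd (ht' hit) hi

lemma val_atomOf {U : ℕ → Set Ω} {s t : Finset ℕ} (ht : t ⊆ s) {ω : Ω}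
    (h : ω ∈ atomOf U s t) (a : ℕ → ℝ) :
    ∑ i ∈ s, a i * ind (U i) ω = ∑ i ∈ t, a i := by
  classical
  rw [mem_atomOf] at h
  have : ∀ i ∈ s, a i * ind (U i) ω = if i ∈ t then a i else 0 := by
    intro i hi
    by_cases hit : i ∈ t
    · rw [if_pos hit, ind_of_mem ((h i hi).2 hit), mul_one]
    · rw [if_neg hit, ind_of_not_mem (fun hw => hit ((h i hi).1 hw)), mul_zero]
  rw [Finset.sum_congr rfl this, Finset.sum_ite_mem, Finset.inter_eq_right.2 ht]

open Classical in
lemma sublevel_eq_biUnion (U : ℕ → Set Ω) (s : Finset ℕ) (a : ℕ → ℝ) :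
    {ω | 0 ≤ ∑ i ∈ s, a i * ind (U i) ω}
      = ⋃ t ∈ s.powerset.filter (fun t => 0 ≤ ∑ i ∈ t, a i), atomOf U s t := by
  ext ω
  simp only [Set.mem_setOf_eq, Set.mem_iUnion, Finset.mem_filter, Finset.mem_powerset]
  constructor
  · intro h
    refine ⟨s.filter (fun i => ω ∈ U i), ⟨Finset.filter_subset _ _, ?_⟩, mem_atomOf_filter s ω⟩
    rwa [← val_atomOf (Finset.filter_subset _ _) (mem_atomOf_filter s ω) a]
  · rintro ⟨t, ⟨hts, hval⟩, hmem⟩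
    rwa [val_atomOf hts hmem a]

lemma sublevel_mem (hC : IsSetField C) {U : ℕ → Set Ω} {s : Finset ℕ}
    (hU : ∀ i ∈ s, U i ∈ C) (a : ℕ → ℝ) :
    {ω | 0 ≤ ∑ i ∈ s, a i * ind (U i) ω} ∈ C := by
  classical
  rw [sublevel_eq_biUnion]
  exact hC.biUnion_mem _ _ fun t _ => atomOf_mem hC hU

open Classical in
lemma setOf_true_mem_aux (U : ℕ → Set Ω) (s : Finset ℕ) {j : ℕ} (hj : j ∈ s) :
    U j = ⋃ t ∈ s.powerset.filter (fun t => j ∈ t), atomOf U s t := by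
  ext ω
  simp only [Set.mem_iUnion, Finset.mem_filter, Finset.mem_powerset]
  constructor
  · intro h
    exact ⟨s.filter (fun i => ω ∈ U i), ⟨Finset.filter_subset _ _,
      Finset.mem_filter.2 ⟨hj, h⟩⟩, mem_atomOf_filter s ω⟩
  · rintro ⟨t, ⟨hts, hjt⟩, hmem⟩
    exact (mem_atomOf.1 hmem j hj).2 hjt

open Classical in
lemma P_eq_sum_atoms (hC : IsSetField C)
    (h3 : ∀ A ∈ C, ∀ B ∈ C, Disjoint A B → P (A ∪ B) = P A + P B)
    {U : ℕ → Set Ω} {s : Finset ℕ}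
    (hU : ∀ i ∈ s, U i ∈ C) {j : ℕ} (hj : j ∈ s) :
    P (U j) = ∑ t ∈ s.powerset.filter (fun t => j ∈ t), P (atomOf U s t) := by
  rw [setOf_true_mem_aux U s hj]
  refine P_biUnion hC h3 _ _ (fun t _ => atomOf_mem hC hU) ?_
  intro t ht t' ht' htt'
  simp only [Finset.mem_filter, Finset.mem_powerset] at ht ht'
  rw [Set.disjoint_left]
  intro ω hω hω'
  exact htt' (atomOf_eq_of_mem ht.1 ht'.1 hω hω')

/-- Core: pointwise-nonnegative simple combination has nonnegative "expectation". -/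
lemma expect_nonneg (hC : IsSetField C) (h2 : ∀ A ∈ C, 0 ≤ P A)
    (h3 : ∀ A ∈ C, ∀ B ∈ C, Disjoint A B → P (A ∪ B) = P A + P B)
    {U : ℕ → Set Ω} {s : Finset ℕ}
    (hU : ∀ i ∈ s, U i ∈ C) {a : ℕ → ℝ}
    (h : ∀ ω, 0 ≤ ∑ i ∈ s, a i * ind (U i) ω) :
    0 ≤ ∑ i ∈ s, a i * P (U i) := by
  classical
  have hrw : ∑ i ∈ s, a i * P (U i)
      = ∑ t ∈ s.powerset, (∑ i ∈ t, a i) * P (atomOf U s t) := by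
    calc ∑ i ∈ s, a i * P (U i)
        = ∑ i ∈ s, ∑ t ∈ s.powerset, (if i ∈ t then a i * P (atomOf U s t) else 0) := by
          refine Finset.sum_congr rfl fun i hi => ?_
          rw [P_eq_sum_atoms hC h3 hU hi, Finset.mul_sum, ← Finset.sum_filter]
      _ = ∑ t ∈ s.powerset, ∑ i ∈ s, (if i ∈ t then a i * P (atomOf U s t) else 0) :=
          Finset.sum_comm
      _ = ∑ t ∈ s.powerset, (∑ i ∈ t, a i) * P (atomOf U s t) := by
          refine Finset.sum_congr rfl fun t ht => ?_
          rw [Finset.sum_mul]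
          rw [Finset.sum_ite_mem s t (fun i => a i * P (atomOf U s t)),
            Finset.inter_eq_right.2 (Finset.mem_powerset.1 ht)]
  rw [hrw]
  refine Finset.sum_nonneg fun t ht => ?_
  rcases Set.eq_empty_or_nonempty (atomOf U s t) with hemp | ⟨ω, hω⟩
  · rw [hemp, P_empty hC h3, mul_zero]
  · refine mul_nonneg ?_ (h2 _ (atomOf_mem hC hU))
    rw [← val_atomOf (Finset.mem_powerset.1 ht) hω a]
    exact h ω

lemma sum_range_add' {M : Type*} [AddCommMonoid M] (f : ℕ → M) (n m : ℕ) :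
    ∑ i ∈ Finset.range (n + m), f i
      = ∑ i ∈ Finset.range n, f i + ∑ i ∈ Finset.range m, f (n + i) := by
  induction m with
  | zero => simp
  | succ k ih =>
    rw [show n + (k + 1) = (n + k) + 1 from rfl, Finset.sum_range_succ, ih,
      Finset.sum_range_succ, add_assoc]

lemma sum_chunks (F : ℕ → ℝ) (n m : ℕ) (f : ℕ → ℝ) (x : ℝ) (g : ℕ → ℝ)
    (h1 : ∀ i < n, F i = f i) (h2 : F n = x) (h3 : ∀ i, F (n + 1 + i) = g i) :
    ∑ i ∈ Finset.range (n + 1 + m), F i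
      = (∑ i ∈ Finset.range n, f i) + x + ∑ i ∈ Finset.range m, g i := by
  rw [show n + 1 + m = (n + 1) + m from rfl, sum_range_add' F (n + 1) m,
    Finset.sum_range_succ,
    Finset.sum_congr rfl (fun i hi => h1 i (Finset.mem_range.1 hi)), h2,
    Finset.sum_congr rfl (fun i _ => h3 i)]

/-- Continuity from below along an increasing sequence of field sets covering `Ω`. -/
lemma P_tendsto_one (hC : IsSetField C) (hP : IsCAProb C P) (H : ℕ → Set Ω)
    (hmono : Monotone H) (hmem : ∀ m, H m ∈ C) (hcover : (⋃ m, H m) = Set.univ) :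
    Tendsto (fun m => P (H m)) atTop (nhds 1) := by
  classical
  set D : ℕ → Set Ω := fun m => Nat.rec (H 0) (fun k _ => H (k + 1) ∩ (H k)ᶜ) m with hD
  have hD0 : D 0 = H 0 := rfl
  have hDs : ∀ k, D (k + 1) = H (k + 1) ∩ (H k)ᶜ := fun k => rfl
  have hDmem : ∀ m, D m ∈ C := by
    intro m
    cases m with
    | zero => exact hmem 0
    | succ k => exact hC.inter_mem (hmem (k + 1)) (hC.compl_mem (hmem k))
  have hDsubH : ∀ m, D m ⊆ H m := by
    intro m; cases m with
    | zero => exact le_rfl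
    | succ k => exact Set.inter_subset_left
  have hdisj : Pairwise (Function.onFun Disjoint D) := by
    have key : ∀ i j, i < j → Disjoint (D i) (D j) := by
      intro i j hij
      obtain ⟨k, rfl⟩ : ∃ k, j = k + 1 := ⟨j - 1, by omega⟩
      rw [Set.disjoint_left]
      intro x hxi hxj
      rw [hDs] at hxj
      exact hxj.2 (hmono (by omega : i ≤ k) (hDsubH i hxi))
    intro i j hij
    rcases lt_or_gt_of_ne hij with h | h
    · exact key i j h
    · exact (key j i h).symm
  have hcoverD : (⋃ m, D m) = Set.univ := by
    apply Set.eq_univ_of_forall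
    intro ω
    have : ω ∈ ⋃ m, H m := by rw [hcover]; trivial
    rw [Set.mem_iUnion] at this
    have hex : ∃ m, ω ∈ H m := this
    rw [Set.mem_iUnion]
    let m₀ := Nat.find hex
    have hm₀ : ω ∈ H m₀ := Nat.find_spec hex
    refine ⟨m₀, ?_⟩
    cases hm : m₀ with
    | zero => rw [hm] at hm₀; exact hm₀
    | succ k =>
      rw [hDs]
      rw [hm] at hm₀
      exact ⟨hm₀, Nat.find_min hex (by omega)⟩
  have hsum := hP.2.2.2 D hDmem hdisj (by rw [hcoverD]; exact hC.univ_mem)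
  rw [hcoverD, hP.1] at hsum
  have hpartial : ∀ m, ∑ i ∈ Finset.range (m + 1), P (D i) = P (H m) := by
    intro m
    induction m with
    | zero => simp [hD0]
    | succ k ih =>
      rw [Finset.sum_range_succ, ih, hDs]
      exact (P_union_diff hC hP.2.2.1 (hmem k) (hmem (k + 1)) (hmono (Nat.le_succ k))).symm
  have ht : Tendsto (fun m => ∑ i ∈ Finset.range (m + 1), P (D i)) atTop (nhds 1) :=
    (tendsto_add_atTop_iff_nat 1).2 hsum.tendsto_sum_nat
  refine ht.congr fun m => hpartial m

set_option maxHeartbeats 1000000 in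
/-- Key countable Markov-type inequality. -/
lemma key_markov (hC : IsSetField C) (hP : IsCAProb C P)
    (w : ℕ → ℝ) (hw : ∀ i, 0 ≤ w i) (B : ℕ → Set Ω) (hB : ∀ i, B i ∈ C)
    (hsq : Summable (fun i => w i * P (B i)))
    (hsI : ∀ ω, Summable (fun i => w i * ind (B i) ω))
    (n : ℕ) (a : ℕ → ℝ) (U : ℕ → Set Ω) (hU : ∀ i, U i ∈ C)
    (hle : ∀ ω, (∑ i ∈ Finset.range n, a i * ind (U i) ω) ≤ ∑' i, w i * ind (B i) ω) :
    (∑ i ∈ Finset.range n, a i * P (U i)) ≤ ∑' i, w i * P (B i) := by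
  classical
  by_contra hcon
  push_neg at hcon
  set η : ℝ := ((∑ i ∈ Finset.range n, a i * P (U i)) - ∑' i, w i * P (B i)) / 2 with hηdef
  have hη : 0 < η := by simp only [hηdef]; linarith
  -- the combined coefficient/set families
  set c : ℕ → ℝ := fun i => if i < n then -(a i) else if i = n then η else w (i - (n + 1))
    with hc
  set V : ℕ → Set Ω := fun i => if i < n then U i else if i = n then Set.univ
    else B (i - (n + 1)) with hV
  have hVmem : ∀ i, V i ∈ C := by
    intro i
    simp only [hV]
    split_ifs
    · exact hU i
    · exact hC.univ_mem
    · exact hB _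
  have hchunk1 : ∀ (ω : Ω) i, i < n → c i * ind (V i) ω = -(a i) * ind (U i) ω := by
    intro ω i hi; simp only [hc, hV, if_pos hi]
  have hcn : c n = η := by simp [hc]
  have hVn : V n = Set.univ := by simp [hV]
  have hchunk2 : ∀ ω : Ω, c n * ind (V n) ω = η := by
    intro ω
    rw [hcn, hVn, ind_of_mem (Set.mem_univ ω), mul_one]
  have hchunk3 : ∀ (ω : Ω) i, c (n + 1 + i) * ind (V (n + 1 + i)) ω = w i * ind (B i) ω := by
    intro ω i
    have h1 : ¬(n + 1 + i < n) := by omega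
    have h2 : ¬(n + 1 + i = n) := by omega
    have h3 : n + 1 + i - (n + 1) = i := by omega
    simp only [hc, hV, if_neg h1, if_neg h2, h3]
  have hsplit : ∀ (m : ℕ) (ω : Ω), ∑ i ∈ Finset.range (n + 1 + m), c i * ind (V i) ω
      = (∑ i ∈ Finset.range n, -(a i) * ind (U i) ω) + η
        + ∑ i ∈ Finset.range m, w i * ind (B i) ω := by
    intro m ω
    exact sum_chunks _ n m _ η _ (hchunk1 ω) (hchunk2 ω) (hchunk3 ω)
  set H : ℕ → Set Ω := fun m =>
    {ω | 0 ≤ ∑ i ∈ Finset.range (n + 1 + m), c i * ind (V i) ω} with hH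
  have hHmem : ∀ m, H m ∈ C := fun m => sublevel_mem hC (fun i _ => hVmem i) c
  have hmemH : ∀ m ω, ω ∈ H m ↔
      (∑ i ∈ Finset.range n, a i * ind (U i) ω)
        ≤ η + ∑ i ∈ Finset.range m, w i * ind (B i) ω := by
    intro m ω
    simp only [hH, Set.mem_setOf_eq, hsplit m ω]
    constructor <;> intro h
    · have : ∑ i ∈ Finset.range n, -(a i) * ind (U i) ω
        = -∑ i ∈ Finset.range n, a i * ind (U i) ω := by
        rw [← Finset.sum_neg_distrib]; exact Finset.sum_congr rfl fun i _ => by ring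
      rw [this] at h; linarith
    · have : ∑ i ∈ Finset.range n, -(a i) * ind (U i) ω
        = -∑ i ∈ Finset.range n, a i * ind (U i) ω := by
        rw [← Finset.sum_neg_distrib]; exact Finset.sum_congr rfl fun i _ => by ring
      rw [this]; linarith
  have hmono : Monotone H := by
    intro m m' hmm ω hω
    rw [hmemH] at hω ⊢
    have hsub : ∑ i ∈ Finset.range m, w i * ind (B i) ω
        ≤ ∑ i ∈ Finset.range m', w i * ind (B i) ω := by
      refine Finset.sum_le_sum_of_subset_of_nonneg
        (Finset.range_subset_range.2 hmm) fun i _ _ => mul_nonneg (hw i) (ind_nonneg _ _)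
    linarith
  have hcover : (⋃ m, H m) = Set.univ := by
    apply Set.eq_univ_of_forall
    intro ω
    rw [Set.mem_iUnion]
    have htend : Tendsto (fun m => ∑ i ∈ Finset.range m, w i * ind (B i) ω) atTop
        (nhds (∑' i, w i * ind (B i) ω)) := (hsI ω).hasSum.tendsto_sum_nat
    have : ∀ᶠ m in atTop, (∑' i, w i * ind (B i) ω) - η
        < ∑ i ∈ Finset.range m, w i * ind (B i) ω :=
      htend.eventually (eventually_gt_nhds (by linarith))
    obtain ⟨m, hm⟩ := this.exists
    refine ⟨m, (hmemH m ω).2 ?_⟩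
    have := hle ω
    linarith
  have htendP : Tendsto (fun m => P (H m)) atTop (nhds 1) :=
    P_tendsto_one hC hP H hmono hHmem hcover
  -- the two expectation estimates
  set K : ℝ := ∑ i ∈ Finset.range n, |a i| with hK
  have hbound : ∀ ω, ∑ i ∈ Finset.range n, a i * ind (U i) ω ≤ K := by
    intro ω
    refine Finset.sum_le_sum fun i _ => ?_
    calc a i * ind (U i) ω ≤ |a i| * ind (U i) ω :=
          mul_le_mul_of_nonneg_right (le_abs_self _) (ind_nonneg _ _)
      _ ≤ |a i| * 1 := mul_le_mul_of_nonneg_left (ind_le_one _ _) (abs_nonneg _)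
      _ = |a i| := mul_one _
  have hmain : ∀ m, (∑ i ∈ Finset.range n, a i * P (U i))
      ≤ η + (∑' i, w i * P (B i)) + K * (1 - P (H m)) := by
    intro m
    -- split P (U i)
    have hsplitP : ∀ i, P (U i) = P (U i ∩ H m) + P (U i ∩ (H m)ᶜ) := by
      intro i
      have h1 : U i ∩ H m ∈ C := hC.inter_mem (hU i) (hHmem m)
      have hsub : U i ∩ H m ⊆ U i := Set.inter_subset_left
      have := P_union_diff hC hP.2.2.1 h1 (hU i) hsub
      have heq : U i ∩ (U i ∩ H m)ᶜ = U i ∩ (H m)ᶜ := by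
        ext x
        simp only [Set.mem_inter_iff, Set.mem_compl_iff]
        tauto
      rw [heq] at this
      exact this
    -- Term 1 estimate
    have hterm1 : (∑ i ∈ Finset.range n, a i * P (U i ∩ H m))
        ≤ η + ∑ i ∈ Finset.range m, w i * P (B i) := by
      set V' : ℕ → Set Ω := fun i => if i < n then U i ∩ H m else if i = n then Set.univ
        else B (i - (n + 1)) with hV'
      have hV'mem : ∀ i, V' i ∈ C := by
        intro i
        simp only [hV']
        split_ifs
        · exact hC.inter_mem (hU i) (hHmem m)
        · exact hC.univ_mem
        · exact hB _
      have hpt : ∀ ω, 0 ≤ ∑ i ∈ Finset.range (n + 1 + m), c i * ind (V' i) ω := by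
        intro ω
        have hch1 : ∀ i, i < n → c i * ind (V' i) ω = -(a i) * ind (U i ∩ H m) ω := by
          intro i hi; simp only [hc, hV', if_pos hi]
        have hV'n : V' n = Set.univ := by simp [hV']
        have hch2 : c n * ind (V' n) ω = η := by
          rw [hcn, hV'n, ind_of_mem (Set.mem_univ ω), mul_one]
        have hch3 : ∀ i, c (n + 1 + i) * ind (V' (n + 1 + i)) ω = w i * ind (B i) ω := by
          intro i
          have h1 : ¬(n + 1 + i < n) := by omega
          have h2 : ¬(n + 1 + i = n) := by omega
          have h3 : n + 1 + i - (n + 1) = i := by omega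
          simp only [hc, hV', if_neg h1, if_neg h2, h3]
        rw [sum_chunks _ n m _ η _ hch1 hch2 hch3]
        by_cases hωH : ω ∈ H m
        · have hind : ∀ i, ind (U i ∩ H m) ω = ind (U i) ω := by
            intro i
            by_cases hωU : ω ∈ U i
            · rw [ind_of_mem (Set.mem_inter hωU hωH), ind_of_mem hωU]
            · rw [ind_of_not_mem (fun h => hωU h.1), ind_of_not_mem hωU]
          have h0 := (hmemH m ω).1 hωH
          have hrw : ∑ i ∈ Finset.range n, -(a i) * ind (U i ∩ H m) ω
              = -∑ i ∈ Finset.range n, a i * ind (U i) ω := by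
            rw [← Finset.sum_neg_distrib]
            exact Finset.sum_congr rfl fun i _ => by rw [hind i]; ring
          rw [hrw]
          linarith
        · have hind : ∀ i, ind (U i ∩ H m) ω = 0 := by
            intro i; exact ind_of_not_mem (fun h => hωH h.2)
          have hrw : ∑ i ∈ Finset.range n, -(a i) * ind (U i ∩ H m) ω = 0 := by
            refine Finset.sum_eq_zero fun i _ => by rw [hind i, mul_zero]
          rw [hrw]
          have : 0 ≤ ∑ i ∈ Finset.range m, w i * ind (B i) ω :=
            Finset.sum_nonneg fun i _ => mul_nonneg (hw i) (ind_nonneg _ _)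
          linarith
      have hE := expect_nonneg hC hP.2.1 hP.2.2.1 (fun i _ => hV'mem i) hpt
      have hch1 : ∀ i, i < n → c i * P (V' i) = -(a i) * P (U i ∩ H m) := by
        intro i hi; simp only [hc, hV', if_pos hi]
      have hV'n : V' n = Set.univ := by simp [hV']
      have hch2 : c n * P (V' n) = η := by
        rw [hcn, hV'n, hP.1, mul_one]
      have hch3 : ∀ i, c (n + 1 + i) * P (V' (n + 1 + i)) = w i * P (B i) := by
        intro i
        have h1 : ¬(n + 1 + i < n) := by omega
        have h2 : ¬(n + 1 + i = n) := by omega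
        have h3 : n + 1 + i - (n + 1) = i := by omega
        simp only [hc, hV', if_neg h1, if_neg h2, h3]
      rw [sum_chunks _ n m _ η _ hch1 hch2 hch3] at hE
      have hrw : ∑ i ∈ Finset.range n, -(a i) * P (U i ∩ H m)
          = -∑ i ∈ Finset.range n, a i * P (U i ∩ H m) := by
        rw [← Finset.sum_neg_distrib]; exact Finset.sum_congr rfl fun i _ => by ring
      rw [hrw] at hE
      linarith
    -- Term 2 estimate
    have hterm2 : (∑ i ∈ Finset.range n, a i * P (U i ∩ (H m)ᶜ)) ≤ K * (1 - P (H m)) := by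
      set c'' : ℕ → ℝ := fun i => if i < n then -(a i) else K with hc''
      set V'' : ℕ → Set Ω := fun i => if i < n then U i ∩ (H m)ᶜ else (H m)ᶜ with hV''
      have hV''mem : ∀ i, V'' i ∈ C := by
        intro i
        simp only [hV'']
        split_ifs
        · exact hC.inter_mem (hU i) (hC.compl_mem (hHmem m))
        · exact hC.compl_mem (hHmem m)
      have hpt : ∀ ω, 0 ≤ ∑ i ∈ Finset.range (n + 1), c'' i * ind (V'' i) ω := by
        intro ω
        rw [Finset.sum_range_succ,
          Finset.sum_congr rfl (fun i hi => by
            simp only [hc'', hV'', if_pos (Finset.mem_range.1 hi)] :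
            ∀ i ∈ Finset.range n, c'' i * ind (V'' i) ω
              = -(a i) * ind (U i ∩ (H m)ᶜ) ω)]
        simp only [hc'', hV'', if_neg (lt_irrefl n)]
        by_cases hωH : ω ∈ H m
        · have hind : ∀ i, ind (U i ∩ (H m)ᶜ) ω = 0 :=
            fun i => ind_of_not_mem (fun h => h.2 hωH)
          rw [Finset.sum_eq_zero (fun i _ => by rw [hind i, mul_zero]),
            ind_of_not_mem (by simpa using hωH), mul_zero]
          norm_num
        · have hind : ∀ i, ind (U i ∩ (H m)ᶜ) ω = ind (U i) ω := by
            intro i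
            by_cases hωU : ω ∈ U i
            · rw [ind_of_mem (Set.mem_inter hωU hωH), ind_of_mem hωU]
            · rw [ind_of_not_mem (fun h => hωU h.1), ind_of_not_mem hωU]
          have hrw : ∑ i ∈ Finset.range n, -(a i) * ind (U i ∩ (H m)ᶜ) ω
              = -∑ i ∈ Finset.range n, a i * ind (U i) ω := by
            rw [← Finset.sum_neg_distrib]
            exact Finset.sum_congr rfl fun i _ => by rw [hind i]; ring
          rw [hrw, ind_of_mem (by simpa using hωH), mul_one]
          have := hbound ω
          linarith
      have hE := expect_nonneg hC hP.2.1 hP.2.2.1 (fun i _ => hV''mem i) hpt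
      rw [Finset.sum_range_succ,
        Finset.sum_congr rfl (fun i hi => by
          simp only [hc'', hV'', if_pos (Finset.mem_range.1 hi)] :
          ∀ i ∈ Finset.range n, c'' i * P (V'' i) = -(a i) * P (U i ∩ (H m)ᶜ))] at hE
      simp only [hc'', hV'', if_neg (lt_irrefl n)] at hE
      rw [P_compl hC hP.1 hP.2.2.1 (hHmem m)] at hE
      have hrw : ∑ i ∈ Finset.range n, -(a i) * P (U i ∩ (H m)ᶜ)
          = -∑ i ∈ Finset.range n, a i * P (U i ∩ (H m)ᶜ) := by
        rw [← Finset.sum_neg_distrib]; exact Finset.sum_congr rfl fun i _ => by ring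
      rw [hrw] at hE
      linarith
    have hpartial_le : ∑ i ∈ Finset.range m, w i * P (B i) ≤ ∑' i, w i * P (B i) :=
      Summable.sum_le_tsum _ (fun i _ => mul_nonneg (hw i) (hP.2.1 _ (hB i))) hsq
    calc ∑ i ∈ Finset.range n, a i * P (U i)
        = (∑ i ∈ Finset.range n, a i * P (U i ∩ H m))
          + ∑ i ∈ Finset.range n, a i * P (U i ∩ (H m)ᶜ) := by
          rw [← Finset.sum_add_distrib]
          exact Finset.sum_congr rfl fun i _ => by rw [hsplitP i]; ring
      _ ≤ (η + ∑ i ∈ Finset.range m, w i * P (B i)) + K * (1 - P (H m)) :=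
          add_le_add hterm1 hterm2
      _ ≤ η + (∑' i, w i * P (B i)) + K * (1 - P (H m)) := by linarith
  -- take the limit in m
  have hlim : Tendsto (fun m => η + (∑' i, w i * P (B i)) + K * (1 - P (H m))) atTop
      (nhds (η + (∑' i, w i * P (B i)) + K * (1 - 1))) := by
    exact tendsto_const_nhds.add ((tendsto_const_nhds.sub htendP).const_mul K)
  have hfinal : (∑ i ∈ Finset.range n, a i * P (U i))
      ≤ η + (∑' i, w i * P (B i)) + K * (1 - 1) :=
    ge_of_tendsto hlim (Eventually.of_forall hmain)
  simp only [sub_self, mul_zero, add_zero] at hfinal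
  simp only [hηdef] at hfinal
  linarith

set_option maxHeartbeats 1000000 in
theorem coherent_of_isCAProb (hC : IsSetField C) (hP : IsCAProb C P) :
    CoherentIn P (System2A C P) := by
  classical
  rintro ⟨α, A, ⟨hA, hsum⟩, ε, hε, hL⟩
  -- Ω is nonempty
  have hne : Nonempty Ω := by
    by_contra h
    rw [not_nonempty_iff] at h
    have h1 : (Set.univ : Set Ω) = ∅ := Set.univ_eq_empty_iff.2 h
    have h2 := hP.1
    rw [h1, P_empty hC hP.2.2.1] at h2
    norm_num at h2
  obtain ⟨ω₀⟩ := hne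
  -- betting-on-complements transformation
  set B : ℕ → Set Ω := fun i => if P (A i) ≤ 1/2 then A i else (A i)ᶜ with hBdef
  set β : ℕ → ℝ := fun i => if P (A i) ≤ 1/2 then α i else -(α i) with hβdef
  have hBC : ∀ i, B i ∈ C := by
    intro i
    simp only [hBdef]
    split_ifs
    · exact hA i
    · exact hC.compl_mem (hA i)
  have hq0 : ∀ i, 0 ≤ P (B i) := fun i => hP.2.1 _ (hBC i)
  have hqhalf : ∀ i, P (B i) ≤ 1/2 := by
    intro i
    simp only [hBdef]
    split_ifs with h
    · exact h
    · rw [P_compl hC hP.1 hP.2.2.1 (hA i)]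
      push_neg at h
      linarith
  have hbterm_eq : ∀ ω i, bterm P β B ω i = bterm P α A ω i := by
    intro ω i
    simp only [bterm, hBdef, hβdef]
    split_ifs with h
    · rfl
    · rw [ind_compl, P_compl hC hP.1 hP.2.2.1 (hA i)]
      ring
  set w : ℕ → ℝ := fun i => |β i| with hwdef
  have hw : ∀ i, 0 ≤ w i := fun i => abs_nonneg _
  have habs : ∀ ω, Summable (fun i => |bterm P β B ω i|) := by
    intro ω
    have : (fun i => |bterm P β B ω i|) = fun i => |bterm P α A ω i| := by
      funext i; rw [hbterm_eq]
    rw [this]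
    exact hsum ω
  have habs_term : ∀ ω i, |bterm P β B ω i| = w i * |ind (B i) ω - P (B i)| := by
    intro ω i
    rw [bterm, abs_mul]
  have hwq_le : ∀ i, w i * P (B i) ≤ |bterm P β B ω₀ i| := by
    intro i
    rw [habs_term]
    refine mul_le_mul_of_nonneg_left ?_ (hw i)
    by_cases hm : ω₀ ∈ B i
    · rw [ind_of_mem hm, abs_of_nonneg (by linarith [P_le_one hC hP.1 hP.2.1 hP.2.2.1 (hBC i)])]
      linarith [hqhalf i]
    · rw [ind_of_not_mem hm]
      rw [abs_of_nonpos (by linarith [hq0 i])]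
      linarith
  have hsq : Summable (fun i => w i * P (B i)) :=
    Summable.of_nonneg_of_le (fun i => mul_nonneg (hw i) (hq0 i)) hwq_le (habs ω₀)
  have hsI : ∀ ω, Summable (fun i => w i * ind (B i) ω) := by
    intro ω
    refine Summable.of_nonneg_of_le (fun i => mul_nonneg (hw i) (ind_nonneg _ _))
      (fun i => ?_) ((habs ω).add hsq)
    rw [habs_term]
    have h1 : ind (B i) ω - P (B i) ≤ |ind (B i) ω - P (B i)| := le_abs_self _
    have h2 : 0 ≤ w i * P (B i) := mul_nonneg (hw i) (hq0 i)
    nlinarith [hw i]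
  -- tail choice
  have htail : Tendsto (fun N => ∑' i, w (i + N) * P (B (i + N))) atTop (nhds 0) :=
    tendsto_sum_nat_add (fun i => w i * P (B i))
  obtain ⟨N, hN⟩ : ∃ N, ∑' i, w (i + N) * P (B (i + N)) < ε / 2 :=
    (htail.eventually (eventually_lt_nhds (half_pos hε))).exists
  set T : ℝ := ∑' i, w (i + N) * P (B (i + N)) with hTdef
  have hT0 : 0 ≤ T := tsum_nonneg fun i => mul_nonneg (hw _) (hq0 _)
  -- simple-function data
  set a : ℕ → ℝ := fun i => if i < N then β i
    else ε - T - (∑ j ∈ Finset.range N, β j * P (B j)) with hadef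
  set U : ℕ → Set Ω := fun i => if i < N then B i else Set.univ with hUdef
  have hUC : ∀ i, U i ∈ C := by
    intro i
    simp only [hUdef]
    split_ifs
    · exact hBC i
    · exact hC.univ_mem
  have hsum_aU : ∀ (g : Set Ω → ℝ), g Set.univ = 1 →
      ∑ i ∈ Finset.range (N + 1), a i * g (U i)
        = (∑ i ∈ Finset.range N, β i * g (B i)) + (ε - T - ∑ j ∈ Finset.range N, β j * P (B j)) := by
    intro g hg
    rw [Finset.sum_range_succ]
    have h1 : ∀ i ∈ Finset.range N, a i * g (U i) = β i * g (B i) := by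
      intro i hi
      have := Finset.mem_range.1 hi
      simp only [hadef, hUdef, if_pos this]
    have h2 : a N * g (U N) = ε - T - ∑ j ∈ Finset.range N, β j * P (B j) := by
      simp only [hadef, hUdef, lt_irrefl, if_neg (lt_irrefl N), if_false, hg, mul_one]
    rw [Finset.sum_congr rfl h1, h2]
  -- the pointwise inequality
  have hle : ∀ ω, (∑ i ∈ Finset.range (N + 1), a i * ind (U i) ω)
      ≤ ∑' i, w (i + N) * ind (B (i + N)) ω := by
    intro ω
    obtain ⟨L, hLt, hLle⟩ := hL ω
    have hLt' : Tendsto (fun n => ∑ i ∈ Finset.range n, bterm P β B ω i) atTop (nhds L) := by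
      refine hLt.congr fun n => ?_
      exact (Finset.sum_congr rfl fun i _ => (hbterm_eq ω i)).symm
    have hS : Summable (bterm P β B ω) := (habs ω).of_abs
    have htsum : ∑' i, bterm P β B ω i = L :=
      tendsto_nhds_unique hS.hasSum.tendsto_sum_nat hLt'
    have hsplit := Summable.sum_add_tsum_nat_add (f := bterm P β B ω) N hS
    -- tail comparison
    have hshiftb : Summable (fun i => bterm P β B ω (i + N)) :=
      ((summable_nat_add_iff N).2 hS)
    have hshiftI : Summable (fun i => w (i + N) * ind (B (i + N)) ω) :=
      ((summable_nat_add_iff N).2 (hsI ω))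
    have hshiftq : Summable (fun i => w (i + N) * P (B (i + N))) :=
      ((summable_nat_add_iff N).2 hsq)
    have hptwise : ∀ i, -(w (i + N) * ind (B (i + N)) ω) - w (i + N) * P (B (i + N))
        ≤ bterm P β B ω (i + N) := by
      intro i
      rw [bterm]
      have h1 : -(w (i + N)) ≤ β (i + N) := neg_abs_le _
      have h2 : |β (i + N) * (ind (B (i + N)) ω - P (B (i + N)))|
          = w (i + N) * |ind (B (i + N)) ω - P (B (i + N))| := habs_term ω (i + N)
      have h3 : -(w (i + N) * |ind (B (i + N)) ω - P (B (i + N))|)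
          ≤ β (i + N) * (ind (B (i + N)) ω - P (B (i + N))) := by
        rw [← h2]; exact neg_abs_le _
      have h4 : |ind (B (i + N)) ω - P (B (i + N))| ≤ ind (B (i + N)) ω + P (B (i + N)) := by
        rw [abs_le]
        constructor <;> [skip; skip] <;> nlinarith [ind_nonneg (B (i + N)) ω, hq0 (i + N)]
      nlinarith [hw (i + N)]
    have hcmp := Summable.tsum_le_tsum hptwise ((hshiftI.neg).sub hshiftq) hshiftb
    have hlhs : ∑' i, (-(w (i + N) * ind (B (i + N)) ω) - w (i + N) * P (B (i + N)))
        = -(∑' i, w (i + N) * ind (B (i + N)) ω) - ∑' i, w (i + N) * P (B (i + N)) :=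
      Summable.tsum_sub hshiftI.neg hshiftq |>.trans (by rw [tsum_neg])
    rw [hlhs] at hcmp
    -- combine
    rw [hsum_aU (fun s => ind s ω) (ind_of_mem (Set.mem_univ ω))]
    have hSN : ∑ i ∈ Finset.range N, β i * ind (B i) ω
        = (∑ i ∈ Finset.range N, bterm P β B ω i) + ∑ j ∈ Finset.range N, β j * P (B j) := by
      rw [← Finset.sum_add_distrib]
      exact Finset.sum_congr rfl fun i _ => by rw [bterm]; ring
    rw [hSN]
    have htail_eq : ∑' i, bterm P β B ω (i + N)
        = L - ∑ i ∈ Finset.range N, bterm P β B ω i := by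
      rw [← htsum, ← hsplit]; ring
    rw [htail_eq] at hcmp
    rw [← hTdef] at hcmp
    linarith
  have hfinal := key_markov hC hP (fun i => w (i + N)) (fun i => hw _)
    (fun i => B (i + N)) (fun i => hBC _) ((summable_nat_add_iff N).2 hsq)
    (fun ω => (summable_nat_add_iff N).2 (hsI ω)) (N + 1) a U hUC hle
  rw [hsum_aU P hP.1] at hfinal
  rw [← hTdef] at hfinal
  linarith

lemma seriesTendsTo_of_eventually_zero {f : ℕ → ℝ} (n₀ : ℕ) (hf : ∀ i, n₀ ≤ i → f i = 0) :
    SeriesTendsTo f (∑ i ∈ Finset.range n₀, f i) := by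
  apply tendsto_atTop_of_eventually_const (i₀ := n₀)
  intro n hn
  refine (Finset.sum_subset (Finset.range_subset_range.2 hn) fun i hi hni => ?_).symm
  rw [Finset.mem_range] at hi
  rw [Finset.mem_range] at hni
  exact hf i (by omega)

lemma summable_abs_bterm_of_eventually_zero {P : Set Ω → ℝ} {α : ℕ → ℝ} {A : ℕ → Set Ω}
    (n₀ : ℕ) (hα : ∀ i, n₀ ≤ i → α i = 0) (ω : Ω) :
    Summable (fun i => |bterm P α A ω i|) := by
  refine summable_of_ne_finset_zero (s := Finset.range n₀) fun i hi => ?_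
  rw [Finset.mem_range] at hi
  rw [bterm, hα i (by omega), zero_mul, abs_zero]

set_option maxHeartbeats 1000000 in
theorem isCAProb_of_coherent (hC : IsSetField C) (h : CoherentIn P (System2A C P)) :
    IsCAProb C P := by
  classical
  -- normalization
  have h1 : P Set.univ = 1 := by
    by_contra hne
    set d : ℝ := P Set.univ - 1 with hd
    have hd0 : d ≠ 0 := fun hh => hne (by rw [hd] at hh; linarith)
    apply h
    refine ⟨fun i => if i = 0 then d else 0, fun _ => Set.univ,
      ⟨fun _ => hC.univ_mem, summable_abs_bterm_of_eventually_zero 1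
        (fun i hi => if_neg (by omega))⟩,
      d ^ 2, by positivity, fun ω => ?_⟩
    refine ⟨-(d ^ 2), ?_, le_refl _⟩
    have := seriesTendsTo_of_eventually_zero (f := bterm P (fun i => if i = 0 then d else 0)
      (fun _ => Set.univ) ω) 1 (fun i hi => by
        rw [bterm]; simp only [if_neg (by omega : i ≠ 0)]; ring)
    have hb0 : bterm P (fun i => if i = 0 then d else 0) (fun _ => Set.univ) ω 0
        = -(d ^ 2) := by
      rw [bterm, ind_of_mem (Set.mem_univ ω)]
      norm_num
      rw [hd]
      ring
    rw [Finset.sum_range_one, hb0] at this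
    exact this
  -- nonnegativity
  have h2 : ∀ A ∈ C, 0 ≤ P A := by
    intro A₀ hA₀
    by_contra hneg
    push_neg at hneg
    apply h
    refine ⟨fun i => if i = 0 then -1 else 0, fun _ => A₀,
      ⟨fun _ => hA₀, summable_abs_bterm_of_eventually_zero 1
        (fun i hi => if_neg (by omega))⟩,
      -(P A₀), by linarith, fun ω => ?_⟩
    refine ⟨P A₀ - ind A₀ ω, ?_, by linarith [ind_nonneg A₀ ω]⟩
    have := seriesTendsTo_of_eventually_zero (f := bterm P (fun i => if i = 0 then -1 else 0)
      (fun _ => A₀) ω) 1 (fun i hi => by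
        rw [bterm]; simp only [if_neg (by omega : i ≠ 0)]; ring)
    have hb0 : bterm P (fun i => if i = 0 then -1 else 0) (fun _ => A₀) ω 0
        = P A₀ - ind A₀ ω := by
      rw [bterm]
      norm_num
    rw [Finset.sum_range_one, hb0] at this
    exact this
  -- finite additivity
  have h3 : ∀ A ∈ C, ∀ B ∈ C, Disjoint A B → P (A ∪ B) = P A + P B := by
    intro A₀ hA₀ B₀ hB₀ hdisj
    by_contra hne
    set d : ℝ := P (A₀ ∪ B₀) - P A₀ - P B₀ with hd
    have hd0 : d ≠ 0 := fun hh => hne (by rw [hd] at hh; linarith)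
    set α : ℕ → ℝ := fun i => if i = 0 then d else if i = 1 then -d else if i = 2 then -d else 0
      with hα
    set As : ℕ → Set Ω := fun i => if i = 0 then A₀ ∪ B₀ else if i = 1 then A₀
      else if i = 2 then B₀ else Set.univ with hAs
    apply h
    refine ⟨α, As,
      ⟨fun i => by
        simp only [hAs]
        split_ifs
        · exact hC.union_mem hA₀ hB₀
        · exact hA₀
        · exact hB₀
        · exact hC.univ_mem,
      summable_abs_bterm_of_eventually_zero 3
        (fun i hi => by simp only [hα]; split_ifs <;> first | omega | rfl)⟩,
      d ^ 2, by positivity, fun ω => ?_⟩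
    refine ⟨-(d ^ 2), ?_, le_refl _⟩
    have hz := seriesTendsTo_of_eventually_zero (f := bterm P α As ω) 3 (fun i hi => by
      rw [bterm]; simp only [hα]
      split_ifs <;> first | omega | ring)
    have hindsum : ind (A₀ ∪ B₀) ω = ind A₀ ω + ind B₀ ω := by
      by_cases hmA : ω ∈ A₀
      · have hmB : ω ∉ B₀ := fun hmB => (Set.disjoint_left.1 hdisj) hmA hmB
        rw [ind_of_mem (Set.mem_union_left _ hmA), ind_of_mem hmA, ind_of_not_mem hmB]
        ring
      · by_cases hmB : ω ∈ B₀
        · rw [ind_of_mem (Set.mem_union_right _ hmB), ind_of_not_mem hmA, ind_of_mem hmB]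
          ring
        · rw [ind_of_not_mem (fun hh => hh.elim hmA hmB), ind_of_not_mem hmA,
            ind_of_not_mem hmB]
          ring
    have hsum3 : ∑ i ∈ Finset.range 3, bterm P α As ω i = -(d ^ 2) := by
      rw [Finset.sum_range_succ, Finset.sum_range_succ, Finset.sum_range_one]
      rw [bterm, bterm, bterm]
      simp only [hα, hAs]
      norm_num
      rw [hindsum]
      ring
    rw [hsum3] at hz
    exact hz
  refine ⟨h1, h2, h3, ?_⟩
  -- countable additivity
  intro A hAmem hdisj hUC
  have hpart : ∀ n, ∑ i ∈ Finset.range n, P (A i) = P (⋃ i ∈ Finset.range n, A i) :=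
    fun n => (P_biUnion hC h3 _ _ (fun i _ => hAmem i)
      (fun i _ j _ hij => hdisj hij)).symm
  have hble : ∀ n, ∑ i ∈ Finset.range n, P (A i) ≤ P (⋃ i, A i) := by
    intro n
    rw [hpart n]
    refine P_mono hC h2 h3 (hC.biUnion_mem _ _ fun i _ => hAmem i) hUC ?_
    exact Set.iUnion₂_subset fun i _ => Set.subset_iUnion A i
  have hnn : ∀ i, 0 ≤ P (A i) := fun i => h2 _ (hAmem i)
  have hsummable : Summable (fun i => P (A i)) := summable_of_sum_range_le hnn hble
  set s : ℝ := ∑' i, P (A i) with hs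
  have hsle : s ≤ P (⋃ i, A i) := Real.tsum_le_of_sum_range_le hnn hble
  -- indicator has-sum fact
  have hindsum : ∀ ω, HasSum (fun i => ind (A i) ω) (ind (⋃ i, A i) ω) := by
    intro ω
    by_cases hm : ω ∈ ⋃ i, A i
    · obtain ⟨i₀, hi₀⟩ := Set.mem_iUnion.1 hm
      have : (fun i => ind (A i) ω) = fun i => if i = i₀ then (1:ℝ) else 0 := by
        funext i
        by_cases hii : i = i₀
        · rw [hii, if_pos rfl, ind_of_mem hi₀]
        · rw [if_neg hii, ind_of_not_mem]
          intro hmem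
          exact Set.disjoint_left.1 (hdisj hii) hmem hi₀
      rw [this, ind_of_mem hm]
      exact hasSum_ite_eq i₀ 1
    · have : (fun i => ind (A i) ω) = fun _ => (0:ℝ) := by
        funext i
        exact ind_of_not_mem fun hmem => hm (Set.mem_iUnion.2 ⟨i, hmem⟩)
      rw [this, ind_of_not_mem hm]
      exact hasSum_zero
  -- rule out s < P (⋃ A)
  have hseq : s = P (⋃ i, A i) := by
    by_contra hslt'
    have hslt : s < P (⋃ i, A i) := lt_of_le_of_ne hsle hslt'
    set α : ℕ → ℝ := fun i => if i = 0 then 1 else -1 with hα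
    set As : ℕ → Set Ω := fun i => if i = 0 then (⋃ j, A j) else A (i - 1) with hAs
    apply h
    have hbshift : ∀ ω k, bterm P α As ω (k + 1) = -(ind (A k) ω - P (A k)) := by
      intro ω k
      rw [bterm]
      simp only [hα, hAs, if_neg (by omega : k + 1 ≠ 0), Nat.add_sub_cancel]
      ring
    refine ⟨α, As,
      ⟨fun i => by
        simp only [hAs]
        split_ifs
        · exact hUC
        · exact hAmem _,
      fun ω => ?_⟩,
      P (⋃ i, A i) - s, by linarith, fun ω => ?_⟩
    · -- summability of |bterm|
      have hIsum : Summable (fun k => ind (A k) ω) := (hindsum ω).summable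
      have hshift : Summable (fun k => |bterm P α As ω (k + 1)|) := by
        refine Summable.of_nonneg_of_le (fun k => abs_nonneg _) (fun k => ?_)
          (hIsum.add hsummable)
        rw [hbshift ω k, abs_neg, abs_le]
        constructor <;> linarith [ind_nonneg (A k) ω, hnn k]
      exact (summable_nat_add_iff 1).1 hshift
    · -- the series tends to s - P (⋃ A)
      refine ⟨s - P (⋃ i, A i), ?_, le_of_eq (by ring)⟩
      have heq : ∀ n, ∑ i ∈ Finset.range (n + 1), bterm P α As ω i
          = (ind (⋃ j, A j) ω - P (⋃ j, A j))
            + ((∑ k ∈ Finset.range n, P (A k)) - ∑ k ∈ Finset.range n, ind (A k) ω) := by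
        intro n
        rw [Finset.sum_range_succ']
        have hb0 : bterm P α As ω 0 = ind (⋃ j, A j) ω - P (⋃ j, A j) := by
          rw [bterm]; simp only [hα, hAs, if_pos rfl]; ring
        rw [hb0, Finset.sum_congr rfl (fun k _ => (hbshift ω k).trans
          (by ring : -(ind (A k) ω - P (A k)) = P (A k) - ind (A k) ω)),
          Finset.sum_sub_distrib]
        ring
      have htend0 : Tendsto (fun n => (ind (⋃ j, A j) ω - P (⋃ j, A j))
          + ((∑ k ∈ Finset.range n, P (A k)) - ∑ k ∈ Finset.range n, ind (A k) ω)) atTop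
          (nhds ((ind (⋃ j, A j) ω - P (⋃ j, A j)) + (s - ind (⋃ j, A j) ω))) :=
        tendsto_const_nhds.add
          ((hsummable.hasSum.tendsto_sum_nat).sub ((hindsum ω).tendsto_sum_nat))
      have htend : Tendsto (fun n => ∑ i ∈ Finset.range (n + 1), bterm P α As ω i) atTop
          (nhds (s - P (⋃ i, A i))) := by
        have hval : (ind (⋃ j, A j) ω - P (⋃ j, A j)) + (s - ind (⋃ j, A j) ω)
            = s - P (⋃ i, A i) := by ring
        rw [← hval]
        exact htend0.congr fun n => (heq n).symm
      exact (tendsto_add_atTop_iff_nat 1).1 htend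
  rw [← hseq]
  exact hsummable.hasSum

end AuxProof

theorem stmt14 (C : Set (Set Ω)) (P : Set Ω → ℝ) (hC : IsSetField C) :
    CoherentIn P (System2A C P) ↔ IsCAProb C P := by
  exact ⟨fun h => isCAProb_of_coherent hC h, fun h => coherent_of_isCAProb hC h⟩
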